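/- With the setup of componentwise recursion $\vec{f}_0 = \vec{1}$, $\vec{f}_t = \max\{\vec{0}, (\vec{f}_{t-1} \odot \vec{d}_{t-1}) - \vec{p}_t\}$: there exists $t \geq 0$ with $\vec{f}_{t+1} = \vec{0}$ if and only if there exists $t \geq 0$ such that $\bigodot_{i=0}^{t} \vec{d}_i - \sum_{i=1}^{t} \vec{p}_i \odot \bigodot_{j=i}^{t} \vec{d}_j - \vec{p}_{t+1} \leq \vec{0}$ (componentwise). -/

import Mathlib

open Finset in
private def Uaux (m : ℕ) (d p : ℕ → Fin m → ℤ) : ℕ → Fin m → ℤ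
  | 0 => fun _ => 1
  | t + 1 => fun j => Uaux m d p t j * d t j - p (t + 1) j

open Finset in
theorem firefighter_birth_sequence_forest_containable_iff
    (m : ℕ) (hm : 1 ≤ m)
    (d : ℕ → Fin m → ℤ) (hd : ∀ t j, 0 < d t j)
    (p : ℕ → Fin m → ℤ) (hp : ∀ t j, 0 ≤ p t j)
    (f : ℕ → Fin m → ℤ) (hf0 : ∀ j, f 0 j = 1)
    (hf : ∀ t j, f (t + 1) j = max 0 (f t j * d t j - p (t + 1) j)) :
    (∃ t : ℕ, ∀ j, f (t + 1) j = 0) ↔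
      ∃ t : ℕ, ∀ j,
        (∏ i ∈ range (t + 1), d i j) -
          (∑ i ∈ Ico 1 (t + 1), p i j * ∏ l ∈ Ico i (t + 1), d l j) -
          p (t + 1) j ≤ 0 := by
  set U : ℕ → Fin m → ℤ := Uaux m d p with hU
  have hU0 : ∀ j, U 0 j = 1 := fun j => rfl
  have hUs : ∀ t j, U (t + 1) j = U t j * d t j - p (t + 1) j := fun t j => rfl
  have key : ∀ t j, f t j = max 0 (U t j) := by
    intro t
    induction t with
    | zero => intro j; simp [hf0, hU0]
    | succ t ih =>
      intro j
      rw [hf t j, ih j, hUs]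
      rcases le_or_gt 0 (U t j) with h | h
      · rw [max_eq_right h]
      · rw [max_eq_left h.le, zero_mul, zero_sub, max_eq_left (by linarith [hp (t+1) j]),
          max_eq_left]
        nlinarith [hd t j, hp (t + 1) j]
  have closed : ∀ t j, U (t + 1) j =
      (∏ i ∈ range (t + 1), d i j) -
        (∑ i ∈ Ico 1 (t + 1), p i j * ∏ l ∈ Ico i (t + 1), d l j) -
        p (t + 1) j := by
    intro t
    induction t with
    | zero => intro j; simp [hUs, hU0]
    | succ t ih =>
      intro j
      have hprod : ∏ i ∈ range (t + 1 + 1), d i j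
          = (∏ i ∈ range (t + 1), d i j) * d (t + 1) j := Finset.prod_range_succ _ _
      rw [hUs, ih j, hprod, Finset.sum_Ico_succ_top (by omega : 1 ≤ t + 1)]
      have hsum : ∑ i ∈ Ico 1 (t + 1), p i j * ∏ l ∈ Ico i (t + 1 + 1), d l j
          = ∑ i ∈ Ico 1 (t + 1), (p i j * ∏ l ∈ Ico i (t + 1), d l j) * d (t + 1) j := by
        refine Finset.sum_congr rfl fun i hi => ?_
        rw [Finset.prod_Ico_succ_top ((Finset.mem_Ico.mp hi).2.le)]; ring
      rw [hsum, Finset.prod_Ico_succ_top (le_refl (t + 1)), Finset.Ico_self,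
        Finset.prod_empty, ← Finset.sum_mul]
      ring
  constructor
  · rintro ⟨t, ht⟩
    exact ⟨t, fun j => by
      have := ht j; rw [key] at this
      have h2 : U (t + 1) j ≤ 0 := by
        by_contra h
        push_neg at h
        rw [max_eq_right h.le] at this
        omega
      rwa [closed] at h2⟩
  · rintro ⟨t, ht⟩
    exact ⟨t, fun j => by
      rw [key, max_eq_left]
      rw [closed]; exact ht j⟩
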